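/- Let k be a field, n ≥ 1, f a permutation of {1,…,n}, A = A(k,X,r_f), and A⁺ the two-sided ideal of A generated by x₁,…,x_n. The left annihilator Ann_A(A⁺) coincides with the set of nilpotent elements of A; every element a ∈ Ann_A(A⁺) satisfies a² = 0, and the product of any two elements of Ann_A(A⁺) is zero (so Ann_A(A⁺) is a two-sided ideal with Ann_A(A⁺)² = 0). In particular every nil one-sided ideal of A is contained in Ann_A(A⁺), and the Jacobson radical of A equals Ann_A(A⁺) and is nilpotent. -/

import Mathlib

noncomputable section

open FreeAlgebra

/-- The defining relations of the Yang–Baxter algebra of the permutation idempotent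
solution `r_f(x,y) = (f(y), y)`. -/
def ybRel (k : Type*) [Field k] (n : ℕ) (f : Equiv.Perm (Fin n)) :
    FreeAlgebra k (Fin n) → FreeAlgebra k (Fin n) → Prop :=
  fun a b => ∃ j p : Fin n, a = ι k j * ι k p ∧ b = ι k (f p) * ι k p

/-- The Yang–Baxter algebra `A(k, X, r_f)`. -/
abbrev YBA (k : Type*) [Field k] (n : ℕ) (f : Equiv.Perm (Fin n)) :=
  RingQuot (ybRel k n f)

/-- The image of the generator `x_i` in `A(k, X, r_f)`. -/
def xgen (k : Type*) [Field k] (n : ℕ) (f : Equiv.Perm (Fin n)) (i : Fin n) :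
    YBA k n f :=
  RingQuot.mkAlgHom k (ybRel k n f) (ι k i)

/-- The augmentation ideal `A⁺`, the two-sided ideal generated by `x₁, …, xₙ`. -/
def Aplus (k : Type*) [Field k] (n : ℕ) (f : Equiv.Perm (Fin n)) :
    TwoSidedIdeal (YBA k n f) :=
  TwoSidedIdeal.span (Set.range (xgen k n f))

/-- The left annihilator of `A⁺` in `A`. -/
def lAnn (k : Type*) [Field k] (n : ℕ) (f : Equiv.Perm (Fin n)) : Set (YBA k n f) :=
  {a : YBA k n f | ∀ b ∈ Aplus k n f, a * b = 0}

namespace S16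
open Polynomial

structure W (n : ℕ) where
  d : ℕ
  q : Fin n
deriving DecidableEq

instance (n : ℕ) : Mul (W n) := ⟨fun u v => ⟨u.d + v.d + 1, v.q⟩⟩

lemma mul_def {n : ℕ} (u v : W n) : u * v = ⟨u.d + v.d + 1, v.q⟩ := rfl

instance (n : ℕ) : Semigroup (W n) where
  mul_assoc u v w := by simp only [mul_def, W.mk.injEq]; refine ⟨by omega, trivial⟩

abbrev M (n : ℕ) := WithOne (W n)

instance (n : ℕ) : DecidableEq (M n) :=
  fun a b => (inferInstance : DecidableEq (Option (W n))) a b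

variable (k : Type*) [Field k] (n : ℕ) (f : Equiv.Perm (Fin n))

abbrev B := MonoidAlgebra k (M n)

/-- the map to `k[X]` -/
def π : B k n →ₐ[k] k[X] :=
  MonoidAlgebra.lift k k[X] (M n) <| WithOne.lift
    ⟨fun w => X ^ (w.d + 1), fun u v => by
      rw [← pow_add]; simp only [mul_def]; congr 1; omega⟩

end S16

namespace S16
open Polynomial MonoidAlgebra
variable (k : Type*) [Field k] (n : ℕ) (f : Equiv.Perm (Fin n))

/-- generators relation in YBA -/
lemma xx (j p : Fin n) :
    xgen k n f j * xgen k n f p = xgen k n f (f p) * xgen k n f p := by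
  unfold xgen
  rw [← map_mul, ← map_mul]
  exact RingQuot.mkAlgHom_rel k ⟨j, p, rfl, rfl⟩

def φ : YBA k n f →ₐ[k] B k n :=
  RingQuot.liftAlgHom k ⟨FreeAlgebra.lift k
      (fun i => MonoidAlgebra.single (↑(⟨0, i⟩ : W n) : M n) (1 : k)),
    by
      rintro x y ⟨j, p, rfl, rfl⟩
      simp only [map_mul, FreeAlgebra.lift_ι_apply, MonoidAlgebra.single_mul_single,
        ← WithOne.coe_mul, mul_def, one_mul]⟩

lemma φ_xgen (i : Fin n) :
    φ k n f (xgen k n f i) = MonoidAlgebra.single (↑(⟨0, i⟩ : W n) : M n) (1 : k) := by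
  unfold φ xgen
  rw [RingQuot.liftAlgHom_mkAlgHom_apply, FreeAlgebra.lift_ι_apply]

def word : ℕ → Fin n → YBA k n f
  | 0, p => xgen k n f p
  | (d+1), p => xgen k n f ((f ^ (d+1)) p) * word d p

lemma word_zero (p : Fin n) : word k n f 0 p = xgen k n f p := rfl
lemma word_succ (d : ℕ) (p : Fin n) :
    word k n f (d+1) p = xgen k n f ((f ^ (d+1)) p) * word k n f d p := rfl

lemma xmul (j q : Fin n) (e : ℕ) :
    xgen k n f j * word k n f e q = word k n f (e+1) q := by
  cases e with
  | zero => rw [word_zero, word_succ, word_zero, pow_one]; exact xx k n f j q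
  | succ e =>
    rw [word_succ k n f (e+1), word_succ k n f e, ← mul_assoc, ← mul_assoc, xx,
      pow_succ' f (e+1), Equiv.Perm.mul_apply]

lemma wordmul (d e : ℕ) (p q : Fin n) :
    word k n f d p * word k n f e q = word k n f (d+e+1) q := by
  induction d with
  | zero => rw [word_zero, xmul, Nat.zero_add]
  | succ d ih =>
    rw [word_succ, mul_assoc, ih, xmul]
    congr 1
    omega

def ψ : B k n →ₐ[k] YBA k n f :=
  MonoidAlgebra.lift k (YBA k n f) (M n) <| WithOne.lift
    ⟨fun w => word k n f w.d w.q, fun u v => by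
      rw [wordmul, mul_def]⟩

lemma ψ_single (w : W n) :
    ψ k n f (MonoidAlgebra.single (↑w : M n) (1:k)) = word k n f w.d w.q := by
  rw [ψ, MonoidAlgebra.lift_single, one_smul, WithOne.lift_coe]
  rfl

lemma φ_word (d : ℕ) (p : Fin n) :
    φ k n f (word k n f d p) = MonoidAlgebra.single (↑(⟨d, p⟩ : W n) : M n) (1:k) := by
  induction d with
  | zero => rw [word_zero, φ_xgen]
  | succ d ih =>
    rw [word_succ, map_mul, φ_xgen, ih, MonoidAlgebra.single_mul_single,
      ← WithOne.coe_mul, mul_def, one_mul, Nat.zero_add]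

/-- the algebra isomorphism -/
def e : YBA k n f ≃ₐ[k] B k n := by
  refine AlgEquiv.ofAlgHom (φ k n f) (ψ k n f) ?_ ?_
  · refine MonoidAlgebra.algHom_ext ?_ (Subsingleton.elim _ _)
    intro m
    simp only [AlgHom.coe_comp, Function.comp_apply, AlgHom.coe_id, id_eq]
    by_cases hm : m = 1
    · rw [hm, ← MonoidAlgebra.one_def, map_one, map_one]
    · obtain ⟨w, rfl⟩ := WithOne.ne_one_iff_exists.1 hm
      rw [ψ_single, φ_word]
  · apply RingQuot.ringQuot_ext'
    apply FreeAlgebra.hom_ext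
    funext i
    simp only [AlgHom.coe_comp, Function.comp_apply, AlgHom.coe_id, id_eq,
      FreeAlgebra.lift_ι_apply]
    show ψ k n f (φ k n f (xgen k n f i)) = xgen k n f i
    rw [φ_xgen, ψ_single]
    rfl

end S16

namespace S16
open Polynomial MonoidAlgebra
variable (k : Type*) [Field k] (n : ℕ) (f : Equiv.Perm (Fin n))

lemma π_single_coe (w : W n) (c : k) :
    π k n (MonoidAlgebra.single (↑w : M n) c) = c • X ^ (w.d + 1) := by
  rw [π, MonoidAlgebra.lift_single, WithOne.lift_coe]
  rfl

lemma π_single_one (c : k) :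
    π k n (MonoidAlgebra.single (1 : M n) c) = C c := by
  rw [π, MonoidAlgebra.lift_single, map_one, smul_eq_C_mul, mul_one]

/-- key multiplication formula -/
lemma mul_single (b : B k n) (w : W n) (r : k) :
    b * MonoidAlgebra.single (↑w : M n) r =
      (π k n b).sum fun t c =>
        MonoidAlgebra.single (↑(⟨t + w.d, w.q⟩ : W n) : M n) (c * r) := by
  induction b using MonoidAlgebra.induction_linear with
  | zero => simp
  | add b₁ b₂ h₁ h₂ =>
    rw [add_mul, h₁, h₂, map_add, Polynomial.sum_add_index]
    · intro t; rw [zero_mul, MonoidAlgebra.single_zero]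
    · intro t c₁ c₂; rw [add_mul, MonoidAlgebra.single_add]
  | single m c =>
    by_cases hm : m = 1
    · subst hm
      rw [MonoidAlgebra.single_mul_single, one_mul, π_single_one,
        ← Polynomial.monomial_zero_left, Polynomial.sum_monomial_index]
      · rw [Nat.zero_add]
      · rw [zero_mul, MonoidAlgebra.single_zero]
    · obtain ⟨u, rfl⟩ := WithOne.ne_one_iff_exists.1 hm
      rw [MonoidAlgebra.single_mul_single, ← WithOne.coe_mul, mul_def, π_single_coe,
        smul_eq_C_mul, C_mul_X_pow_eq_monomial, Polynomial.sum_monomial_index]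
      · rw [show u.d + 1 + w.d = u.d + w.d + 1 from by omega]
      · rw [zero_mul, MonoidAlgebra.single_zero]

/-- master multiplication lemma: if `π b = 0` then `b` multiplies everything down to
its "constant coefficient" multiple. -/
lemma mul_eq (b : B k n) (hb : π k n b = 0) (c : B k n) :
    b * c = ((π k n c).coeff 0) • b := by
  induction c using MonoidAlgebra.induction_linear with
  | zero => simp
  | add c₁ c₂ h₁ h₂ => rw [mul_add, h₁, h₂, map_add, Polynomial.coeff_add, add_smul]
  | single m r =>
    by_cases hm : m = 1
    · subst hm
      have h1 : (MonoidAlgebra.single (1 : M n) r : B k n) = r • (1 : B k n) := by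
        rw [MonoidAlgebra.one_def, MonoidAlgebra.smul_single, smul_eq_mul, mul_one]
      rw [h1, mul_smul_comm, mul_one, map_smul, map_one, Polynomial.coeff_smul, Polynomial.coeff_one]
      simp
    · obtain ⟨u, rfl⟩ := WithOne.ne_one_iff_exists.1 hm
      rw [mul_single, hb, Polynomial.sum_zero_index, π_single_coe, Polynomial.coeff_smul,
        coeff_X_pow]
      simp

lemma sum_single_eq_zero (q : Fin n) (p : k[X])
    (h : (p.sum fun t c => (MonoidAlgebra.single (↑(⟨t, q⟩ : W n) : M n) c : B k n)) = 0) :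
    p = 0 := by
  ext t₀
  rw [Polynomial.coeff_zero]
  have h2 := Finsupp.ext_iff.1 (congrArg MonoidAlgebra.coeff h) (↑(⟨t₀, q⟩ : W n) : M n)
  rw [Polynomial.sum, MonoidAlgebra.coeff_sum, Finset.sum_apply'] at h2
  simp only [MonoidAlgebra.coeff_single, MonoidAlgebra.coeff_zero, Finsupp.single_apply, Finsupp.coe_zero, Pi.zero_apply, WithOne.coe_inj,
    W.mk.injEq, and_true] at h2
  rw [Finset.sum_ite_eq' p.support t₀ (fun t => p.coeff t)] at h2
  by_cases hmem : t₀ ∈ p.support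
  · rw [if_pos hmem] at h2; exact h2
  · exact Polynomial.notMem_support_iff.1 hmem

end S16

namespace S16
open Polynomial MonoidAlgebra
variable (k : Type*) [Field k] (n : ℕ) (f : Equiv.Perm (Fin n))

end S16

lemma isUnit_one_sub_sq {R : Type*} [Ring R] {u : R} (h : u * u = 0) : IsUnit (1 - u) := by
  refine ⟨⟨1 - u, 1 + u, ?_, ?_⟩, rfl⟩
  · rw [show (1 - u) * (1 + u) = 1 - u * u by noncomm_ring, h, sub_zero]
  · rw [show (1 + u) * (1 - u) = 1 - u * u by noncomm_ring, h, sub_zero]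

namespace S16
open Polynomial MonoidAlgebra
variable (k : Type*) [Field k] (n : ℕ) (f : Equiv.Perm (Fin n))

def E : YBA k n f →ₐ[k] k[X] :=
  (π k n).comp ((e k n f : YBA k n f →ₐ[k] B k n))

lemma E_def (a : YBA k n f) : E k n f a = π k n (e k n f a) := rfl

lemma e_xgen (q : Fin n) :
    e k n f (xgen k n f q) = MonoidAlgebra.single (↑(⟨0, q⟩ : W n) : M n) (1 : k) :=
  φ_xgen k n f q

lemma eps_Aplus {b : YBA k n f} (hb : b ∈ Aplus k n f) :
    (π k n (e k n f b)).coeff 0 = 0 := by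
  let ε₀ : YBA k n f →+* k :=
    (Polynomial.evalRingHom (0 : k)).comp
      (((π k n) : B k n →+* k[X]).comp ((e k n f : YBA k n f ≃+* B k n) : YBA k n f →+* B k n))
  have hker : b ∈ TwoSidedIdeal.ker ε₀ := by
    refine TwoSidedIdeal.mem_span_iff.1 hb _ ?_
    rintro _ ⟨q, rfl⟩
    rw [SetLike.mem_coe, TwoSidedIdeal.mem_ker]
    show Polynomial.eval 0 (π k n (e k n f (xgen k n f q))) = 0
    rw [e_xgen, π_single_coe]
    simp
  have h0 : Polynomial.eval 0 (π k n (e k n f b)) = 0 := (TwoSidedIdeal.mem_ker _).1 hker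
  rwa [Polynomial.coeff_zero_eq_eval_zero]

lemma mem_lAnn_iff [NeZero n] (a : YBA k n f) :
    a ∈ lAnn k n f ↔ E k n f a = 0 := by
  constructor
  · intro h
    set q0 : Fin n := ⟨0, Nat.pos_of_ne_zero (NeZero.ne n)⟩
    have h0 : a * xgen k n f q0 = 0 :=
      h _ (TwoSidedIdeal.subset_span (Set.mem_range_self q0))
    have h1 := congrArg (e k n f) h0
    rw [map_mul, map_zero, e_xgen, mul_single] at h1
    simp only [Nat.add_zero, mul_one] at h1
    exact sum_single_eq_zero k n q0 _ h1
  · intro hE b hb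
    have hE' : π k n (e k n f a) = 0 := by rw [← E_def]; exact hE
    apply (e k n f).injective
    rw [map_mul, map_zero, mul_eq k n _ hE', eps_Aplus k n f hb, zero_smul]

lemma lAnn_mul [NeZero n] {a b : YBA k n f} (ha : a ∈ lAnn k n f) (hb : b ∈ lAnn k n f) :
    a * b = 0 := by
  have ha' : π k n (e k n f a) = 0 := by rw [← E_def]; exact (mem_lAnn_iff k n f a).1 ha
  have hb' : π k n (e k n f b) = 0 := by rw [← E_def]; exact (mem_lAnn_iff k n f b).1 hb
  apply (e k n f).injective
  rw [map_mul, map_zero, mul_eq k n _ ha', hb', Polynomial.coeff_zero, zero_smul]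

lemma nilpotent_mem_lAnn [NeZero n] {a : YBA k n f} (ha : IsNilpotent a) :
    a ∈ lAnn k n f := by
  rw [mem_lAnn_iff]
  obtain ⟨m, hm⟩ := ha
  have : IsNilpotent (E k n f a) := ⟨m, by rw [← map_pow, hm, map_zero]⟩
  exact this.eq_zero

lemma E_surj [NeZero n] : Function.Surjective (E k n f) := by
  have hx0 : E k n f (xgen k n f ⟨0, Nat.pos_of_ne_zero (NeZero.ne n)⟩) = X := by
    rw [E_def, e_xgen, π_single_coe]
    simp
  have hX : X ∈ (E k n f).range := ⟨_, hx0⟩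
  rw [← AlgHom.range_eq_top]
  refine le_antisymm le_top ?_
  rw [← Polynomial.adjoin_X]
  exact Algebra.adjoin_le (Set.singleton_subset_iff.2 hX)

lemma jac_iff [NeZero n] (x : YBA k n f) :
    x ∈ Ideal.jacobson (⊥ : Ideal (YBA k n f)) ↔ x ∈ lAnn k n f := by
  constructor
  · intro hx
    rw [mem_lAnn_iff]
    by_contra hne
    have hjk : Ideal.jacobson (⊥ : Ideal k) = ⊥ :=
      le_bot_iff.1 (sInf_le ⟨le_rfl, Ideal.bot_isMaximal⟩)
    have hjkx : Ideal.jacobson (⊥ : Ideal k[X]) = ⊥ :=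
      Ideal.jacobson_bot_polynomial_of_jacobson_bot hjk
    have hstep : ∃ m : Ideal k[X], m.IsMaximal ∧ E k n f x ∉ m := by
      by_contra hc
      push_neg at hc
      have hmem : E k n f x ∈ Ideal.jacobson (⊥ : Ideal k[X]) :=
        Submodule.mem_sInf.2 fun m hm => hc m hm.2
      rw [hjkx] at hmem
      exact hne hmem
    obtain ⟨m, hmax, hnm⟩ := hstep
    haveI := hmax
    haveI hM : (Ideal.comap (E k n f) m).IsMaximal :=
      Ideal.comap_isMaximal_of_surjective _ (E_surj k n f)
    exact hnm (Submodule.mem_sInf.1 hx _ ⟨bot_le, hM⟩)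
  · intro ha
    refine Submodule.mem_sInf.2 ?_
    rintro m ⟨-, hmax⟩
    by_contra hnm
    have hlt : m < m ⊔ Ideal.span {x} := by
      refine lt_of_le_of_ne le_sup_left fun hEq => hnm ?_
      rw [hEq]
      exact Submodule.mem_sup_right (Ideal.subset_span (Set.mem_singleton x))
    have htop := hmax.1.2 _ hlt
    have h1 : (1 : YBA k n f) ∈ m ⊔ Ideal.span {x} := htop ▸ Submodule.mem_top
    obtain ⟨y, hy, z, hz, hyz⟩ := Submodule.mem_sup.1 h1
    obtain ⟨r, rfl⟩ := Submodule.mem_span_singleton.1 hz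
    have hu : r • x ∈ lAnn k n f := by
      rw [mem_lAnn_iff, smul_eq_mul, map_mul, (mem_lAnn_iff k n f x).1 ha, mul_zero]
    have husq : (r • x) * (r • x) = 0 := lAnn_mul k n f hu hu
    have hy1 : y = 1 - r • x := eq_sub_of_add_eq hyz
    exact hmax.1.1 (Ideal.eq_top_of_isUnit_mem m hy (hy1 ▸ isUnit_one_sub_sq husq))

end S16

/-- `Ann_A(A⁺)` is exactly the set of nilpotent elements of `A`;
every element of it squares to zero and the product of any two of its elements is
zero; every nil one-sided ideal (indeed every set of nilpotents) is contained in it;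
and the Jacobson radical of `A` equals `Ann_A(A⁺)` and is nilpotent. -/
theorem stmt_16 (k : Type*) [Field k] (n : ℕ) [NeZero n] (f : Equiv.Perm (Fin n)) :
    lAnn k n f = {a : YBA k n f | IsNilpotent a} ∧
    (∀ a ∈ lAnn k n f, a * a = 0) ∧
    (∀ a ∈ lAnn k n f, ∀ b ∈ lAnn k n f, a * b = 0) ∧
    (∀ s : Set (YBA k n f), (∀ a ∈ s, IsNilpotent a) → s ⊆ lAnn k n f) ∧
    (((Ideal.jacobson (⊥ : Ideal (YBA k n f))) : Set (YBA k n f)) = lAnn k n f) ∧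
    (∃ m : ℕ, 0 < m ∧ ∀ g : Fin m → YBA k n f,
      (∀ i, g i ∈ Ideal.jacobson (⊥ : Ideal (YBA k n f))) → (List.ofFn g).prod = 0) := by
  refine ⟨?_, fun a ha => S16.lAnn_mul k n f ha ha,
    fun a ha b hb => S16.lAnn_mul k n f ha hb,
    fun s hs a ha => S16.nilpotent_mem_lAnn k n f (hs a ha), ?_, 2, two_pos, ?_⟩
  · ext a
    exact ⟨fun ha => ⟨2, by rw [pow_two]; exact S16.lAnn_mul k n f ha ha⟩,
      fun ha => S16.nilpotent_mem_lAnn k n f ha⟩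
  · ext x
    rw [SetLike.mem_coe, S16.jac_iff]
  · intro g hg
    have h0 : g 0 ∈ lAnn k n f := (S16.jac_iff k n f _).1 (hg 0)
    have h1 : g 1 ∈ lAnn k n f := (S16.jac_iff k n f _).1 (hg 1)
    rw [List.ofFn_succ, List.ofFn_succ, List.ofFn_zero, List.prod_cons, List.prod_cons,
      List.prod_nil, mul_one]
    exact S16.lAnn_mul k n f h0 h1

end
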